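/- A simple deformation A + P of a square complex matrix A (where P has k entries that are independent parameters and the rest zero) is versal if and only if for every matrix M of the same size there exist a matrix R and a matrix P₀ obtained from P by substituting complex numbers for the parameters such that M + (AR − RA) = P₀; it is miniversal if and only if such P₀ (and the substituted values) is always unique. -/

import Mathlib

open Matrix

noncomputable instance {m n : ℕ} : NormedAddCommGroup (Matrix (Fin m) (Fin n) ℂ) :=
  Matrix.frobeniusNormedAddCommGroup

noncomputable instance {m n : ℕ} : NormedSpace ℂ (Matrix (Fin m) (Fin n) ℂ) :=
  Matrix.frobeniusNormedSpace

attribute [local instance] Matrix.frobeniusNormedRing Matrix.frobeniusNormedAlgebra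

open Filter

/-- Versality of a deformation `𝒜` of `A`, with parameter space `ι → ℂ`. -/
def IsVersal {n : ℕ} {ι : Type} [Fintype ι] (A : Matrix (Fin n) (Fin n) ℂ)
    (𝒜 : (ι → ℂ) → Matrix (Fin n) (Fin n) ℂ) : Prop :=
  ∃ (S : Matrix (Fin n) (Fin n) ℂ → Matrix (Fin n) (Fin n) ℂ)
    (h : Matrix (Fin n) (Fin n) ℂ → (ι → ℂ)),
    AnalyticAt ℂ S 0 ∧ AnalyticAt ℂ h 0 ∧ S 0 = 1 ∧ h 0 = 0 ∧
    ∀ᶠ E in nhds 0, 𝒜 (h E) * S E = S E * (A + E)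


section
variable {E F : Type*} [NormedAddCommGroup E] [NormedSpace ℂ E] [CompleteSpace E]
  [NormedAddCommGroup F] [NormedSpace ℂ F]

lemma analytic_local_inverse (f : E → F) (i : E ≃L[ℂ] F) (a : E)
    (hf : AnalyticAt ℂ f a) (hd : HasFDerivAt f (i : E →L[ℂ] F) a) :
    ∃ g : F → E, AnalyticAt ℂ g (f a) ∧ g (f a) = a ∧ ∀ᶠ y in nhds (f a), f (g y) = y := by
  have hfd : fderiv ℂ f a = (i : E →L[ℂ] F) := hd.fderiv
  have hs : HasStrictFDerivAt f (i : E →L[ℂ] F) a := by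
    have := hf.hasStrictFDerivAt
    rwa [hfd] at this
  set φ := hs.toOpenPartialHomeomorph f with hφ
  have hcoe : (φ : E → F) = f := hs.toOpenPartialHomeomorph_coe
  have hsrc : a ∈ φ.source := hs.mem_toOpenPartialHomeomorph_source
  obtain ⟨p, hp⟩ := hf
  have hderiv : HasFDerivAt f (continuousMultilinearCurryFin1 ℂ E F (p 1)) a :=
    hp.hasFDerivAt
  have hp1 : p 1 = (continuousMultilinearCurryFin1 ℂ E F).symm (i : E →L[ℂ] F) := by
    have : (continuousMultilinearCurryFin1 ℂ E F) (p 1) = (i : E →L[ℂ] F) :=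
      hderiv.unique hd
    simp [← this]
  have hpφ : HasFPowerSeriesAt (φ : E → F) p a := by rwa [hcoe]
  have hsymm := φ.hasFPowerSeriesAt_symm hsrc hpφ hp1
  refine ⟨φ.symm, ?_, ?_, ?_⟩
  · rw [← hcoe]; exact ⟨_, hsymm⟩
  · rw [← hcoe]; exact φ.left_inv hsrc
  · have := φ.eventually_right_inverse' hsrc
    rw [hcoe] at this
    filter_upwards [this] with y hy
    rw [← hcoe] at hy ⊢; rw [hy]

end

section Versal

variable {n : ℕ} {ι : Type} [Fintype ι]

local notation "gl" => Matrix (Fin n) (Fin n) ℂ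

/-- The linear map `(R, α) ↦ (A*R - R*A) + Q α`. -/
noncomputable def commPerturb (A : Matrix (Fin n) (Fin n) ℂ)
    (Q : (ι → ℂ) →ₗ[ℂ] Matrix (Fin n) (Fin n) ℂ) :
    (Matrix (Fin n) (Fin n) ℂ × (ι → ℂ)) →ₗ[ℂ] Matrix (Fin n) (Fin n) ℂ :=
  ((LinearMap.mulLeft ℂ A - LinearMap.mulRight ℂ A).comp (LinearMap.fst ℂ _ _)) +
    Q.comp (LinearMap.snd ℂ _ _)

@[simp] lemma commPerturb_apply (A : Matrix (Fin n) (Fin n) ℂ)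
    (Q : (ι → ℂ) →ₗ[ℂ] Matrix (Fin n) (Fin n) ℂ) (x : Matrix (Fin n) (Fin n) ℂ × (ι → ℂ)) :
    commPerturb A Q x = (A * x.1 - x.1 * A) + Q x.2 := by
  simp [commPerturb, LinearMap.mulLeft_apply, LinearMap.mulRight_apply]

set_option maxHeartbeats 1600000 in
set_option synthInstance.maxHeartbeats 1000000 in
lemma versal_of_surj (A : Matrix (Fin n) (Fin n) ℂ)
    (Q : (ι → ℂ) →ₗ[ℂ] Matrix (Fin n) (Fin n) ℂ)
    (hsurj : ∀ M : Matrix (Fin n) (Fin n) ℂ, ∃ R α, M = (A * R - R * A) + Q α) :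
    IsVersal A (fun α => A + Q α) := by
  classical
  set T := commPerturb A Q with hT
  have hTsurj : Function.Surjective T := by
    intro M
    obtain ⟨R, α, hRα⟩ := hsurj M
    exact ⟨(R, α), by simp [hT, hRα]⟩
  obtain ⟨C, hC⟩ := Submodule.exists_isCompl (LinearMap.ker T)
  set t : C →ₗ[ℂ] gl := T.comp C.subtype with ht
  have htinj : Function.Injective t := by
    rw [← LinearMap.ker_eq_bot, LinearMap.ker_comp, Submodule.eq_bot_iff]
    intro x hx
    have h1 : (x : gl × (ι → ℂ)) ∈ LinearMap.ker T ⊓ C :=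
      ⟨by simpa using hx, x.2⟩
    rw [hC.inf_eq_bot] at h1
    exact Subtype.ext (by simpa using h1)
  have htsurj : Function.Surjective t := by
    intro M
    obtain ⟨x, hx⟩ := hTsurj M
    have hxmem : x ∈ LinearMap.ker T ⊔ C := by rw [hC.sup_eq_top]; trivial
    obtain ⟨y, hy, z, hz, hyz⟩ := Submodule.mem_sup.1 hxmem
    refine ⟨⟨z, hz⟩, ?_⟩
    have hTz : T z = T x := by
      rw [← hyz]; simp [map_add, LinearMap.mem_ker.1 hy]
    simp [ht, hTz, hx]
  set tE : C ≃ₗ[ℂ] gl := LinearEquiv.ofBijective t ⟨htinj, htsurj⟩ with htE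
  have htE_app : ∀ c : C, tE c = t c := fun _ => rfl
  set Qc : (ι → ℂ) →L[ℂ] gl := LinearMap.toContinuousLinearMap Q with hQc
  set π1 : (gl × C) →L[ℂ] gl :=
    (ContinuousLinearMap.fst ℂ gl (ι → ℂ)).comp
      (C.subtypeL.comp (ContinuousLinearMap.snd ℂ gl C)) with hπ1
  set π2 : (gl × C) →L[ℂ] (ι → ℂ) :=
    (ContinuousLinearMap.snd ℂ gl (ι → ℂ)).comp
      (C.subtypeL.comp (ContinuousLinearMap.snd ℂ gl C)) with hπ2
  have hπ1_app : ∀ x : gl × C, π1 x = (x.2 : gl × (ι → ℂ)).1 := fun x => rfl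
  have hπ2_app : ∀ x : gl × C, π2 x = (x.2 : gl × (ι → ℂ)).2 := fun x => rfl
  have hQc_app : ∀ β, Qc β = Q β := fun _ => rfl
  set H : (gl × C) → gl × gl := fun x =>
    (x.1, (A + Qc (π2 x)) * (1 + π1 x) - (1 + π1 x) * (A + x.1)) with hH
  have hH0 : H 0 = 0 := by
    simp [hH]
  -- derivative of H as a linear equivalence
  set D : (gl × C) ≃ₗ[ℂ] gl × gl :=
    { toFun := fun x => (x.1, t x.2 - x.1)
      invFun := fun y => (y.1, tE.symm (y.1 + y.2))
      map_add' := fun x y => by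
        ext1
        · rfl
        · show t (x.2 + y.2) - (x.1 + y.1) = (t x.2 - x.1) + (t y.2 - y.1)
          rw [map_add]; abel
      map_smul' := fun c x => by
        ext1
        · rfl
        · show t (c • x.2) - c • x.1 = c • (t x.2 - x.1)
          rw [_root_.map_smul, smul_sub]
      left_inv := fun x => by
        ext1
        · rfl
        · show tE.symm (x.1 + (t x.2 - x.1)) = x.2
          have h1 : x.1 + (t x.2 - x.1) = t x.2 := by abel
          rw [h1, ← htE_app, tE.symm_apply_apply]
      right_inv := fun y => by
        ext1
        · rfl
        · show t (tE.symm (y.1 + y.2)) - y.1 = y.2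
          have h1 : t (tE.symm (y.1 + y.2)) = y.1 + y.2 := by
            rw [← htE_app, tE.apply_symm_apply]
          rw [h1]; abel } with hD
  have hD_app : ∀ x : gl × C, D x = (x.1, t x.2 - x.1) := fun _ => rfl
  set i : (gl × C) ≃L[ℂ] gl × gl := D.toContinuousLinearEquiv with hi
  have hi_app : ∀ x, (i : (gl × C) →L[ℂ] gl × gl) x = D x := fun _ => rfl
  -- alternate form of H
  have hts : ∀ x : gl × C, t x.2 = (A * π1 x - π1 x * A) + Qc (π2 x) := by
    intro x
    rw [hπ1_app, hπ2_app, hQc_app]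
    simp [ht, hT]
  have hHalt : H = fun x => D x + ((0 : gl), Qc (π2 x) * π1 x - π1 x * x.1) := by
    funext x
    ext1
    · show x.1 = x.1 + 0
      rw [add_zero]
    · show (A + Qc (π2 x)) * (1 + π1 x) - (1 + π1 x) * (A + x.1)
        = (t x.2 - x.1) + (Qc (π2 x) * π1 x - π1 x * x.1)
      rw [hts x]
      noncomm_ring
  -- H is analytic at 0
  have hHan : AnalyticAt ℂ H 0 := by
    apply AnalyticAt.prod
    · exact (ContinuousLinearMap.fst ℂ gl C).analyticAt 0
    · apply AnalyticAt.sub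
      · exact (analyticAt_const.add ((Qc.comp π2).analyticAt 0)).mul
          (analyticAt_const.add (π1.analyticAt 0))
      · exact (analyticAt_const.add (π1.analyticAt 0)).mul
          (analyticAt_const.add ((ContinuousLinearMap.fst ℂ gl C).analyticAt 0))
  -- H has derivative i at 0
  have hHderiv : HasFDerivAt H (i : (gl × C) →L[ℂ] gl × gl) 0 := by
    have h1 : HasFDerivAt (fun x : gl × C => Qc (π2 x) * π1 x)
        (0 : (gl × C) →L[ℂ] gl) 0 := by
      have ha : HasFDerivAt (fun x : gl × C => Qc (π2 x)) (Qc.comp π2) 0 :=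
        (Qc.comp π2).hasFDerivAt
      have hb : HasFDerivAt (fun x : gl × C => π1 x) π1 0 := π1.hasFDerivAt
      have := ha.mul' hb
      have hz : (Qc.comp π2).smulRight (0 : gl) = 0 := by
        ext x <;> simp [ContinuousLinearMap.smulRight_apply]
      exact this.congr_fderiv (ContinuousLinearMap.ext fun x => by
        change Qc (π2 0) * π1 x + Qc (π2 x) * π1 0 = 0; simp)
    have h2 : HasFDerivAt (fun x : gl × C => π1 x * x.1)
        (0 : (gl × C) →L[ℂ] gl) 0 := by
      have ha : HasFDerivAt (fun x : gl × C => π1 x) π1 0 := π1.hasFDerivAt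
      have hb : HasFDerivAt (fun x : gl × C => x.1)
          (ContinuousLinearMap.fst ℂ gl C) 0 :=
        (ContinuousLinearMap.fst ℂ gl C).hasFDerivAt
      have := ha.mul' hb
      have hz : π1.smulRight (0 : gl) = 0 := by
        ext x <;> simp [ContinuousLinearMap.smulRight_apply]
      exact this.congr_fderiv (ContinuousLinearMap.ext fun x => by
        change π1 0 * (ContinuousLinearMap.fst ℂ gl C) x + π1 x * (0 : gl × C).1 = 0; simp)
    have hq : HasFDerivAt (fun x : gl × C => Qc (π2 x) * π1 x - π1 x * x.1)
        (0 : (gl × C) →L[ℂ] gl) 0 := by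
      have := h1.sub h2
      exact this.congr_fderiv (sub_zero _)
    have hψ : HasFDerivAt (fun x : gl × C => ((0 : gl), Qc (π2 x) * π1 x - π1 x * x.1))
        ((0 : (gl × C) →L[ℂ] gl).prod (0 : (gl × C) →L[ℂ] gl)) 0 :=
      (hasFDerivAt_const _ _).prodMk hq
    have hDf : HasFDerivAt (fun x : gl × C => D x) (i : (gl × C) →L[ℂ] gl × gl) 0 := by
      have := (i : (gl × C) →L[ℂ] gl × gl).hasFDerivAt (x := 0)
      exact this
    rw [hHalt]
    have := hDf.add hψ
    have hz : ((i : (gl × C) →L[ℂ] gl × gl) +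
        (0 : (gl × C) →L[ℂ] gl).prod (0 : (gl × C) →L[ℂ] gl))
        = (i : (gl × C) →L[ℂ] gl × gl) := by
      ext x <;> simp
    exact this.congr_fderiv hz
  -- apply the analytic inverse function theorem
  obtain ⟨g, hgan, hg0, hginv⟩ := analytic_local_inverse H i 0 hHan hHderiv
  rw [hH0] at hgan hg0 hginv
  -- build S and h
  set S : gl → gl := fun E => 1 + π1 (g (E, 0)) with hS
  set h : gl → (ι → ℂ) := fun E => π2 (g (E, 0)) with hh
  have hemb : AnalyticAt ℂ (fun E : gl => ((E, 0) : gl × gl)) 0 :=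
    (ContinuousLinearMap.inl ℂ gl gl).analyticAt 0
  have hg_comp : AnalyticAt ℂ (fun E : gl => g (E, 0)) 0 := by
    have h := AnalyticAt.comp (g := g) (f := fun E : gl => ((E, 0) : gl × gl)) (x := 0)
      (by exact hgan) hemb
    exact h
  refine ⟨S, h, ?_, ?_, ?_, ?_, ?_⟩
  · exact analyticAt_const.add ((π1.analyticAt _).comp hg_comp)
  · exact (π2.analyticAt _).comp hg_comp
  · show (1 : gl) + π1 (g 0) = 1
    rw [hg0]
    simp
  · show π2 (g 0) = 0
    rw [hg0]
    simp
  · -- the versality equation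
    have htend : Tendsto (fun E : gl => ((E, 0) : gl × gl)) (nhds 0) (nhds 0) := by
      have := (ContinuousLinearMap.inl ℂ gl gl).continuous.tendsto 0
      exact (continuous_id.prodMk continuous_const).tendsto' 0 0 (by simp)
    filter_upwards [htend.eventually hginv] with E hE
    have h1 : (g (E, 0)).1 = E := congrArg Prod.fst hE
    have h2 : (A + Qc (π2 (g (E, 0)))) * (1 + π1 (g (E, 0)))
        - (1 + π1 (g (E, 0))) * (A + (g (E, 0)).1) = 0 := congrArg Prod.snd hE
    rw [h1] at h2
    have h2' := h2
    rw [hQc_app] at h2'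
    show (A + Q (h E)) * S E = S E * (A + E)
    exact sub_eq_zero.mp h2'


set_option maxHeartbeats 1600000 in
set_option synthInstance.maxHeartbeats 1000000 in
lemma surj_of_versal (A : Matrix (Fin n) (Fin n) ℂ)
    (B : (ι → ℂ) → Matrix (Fin n) (Fin n) ℂ)
    (hB : AnalyticAt ℂ B 0) (hB0 : B 0 = A) (hv : IsVersal A B) :
    ∀ M : Matrix (Fin n) (Fin n) ℂ, ∃ R α, M + (A * R - R * A) = fderiv ℂ B 0 α := by
  obtain ⟨S, h, hS, hh, hS0, hh0, heq⟩ := hv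
  intro M
  set DS := fderiv ℂ S 0 with hDS
  set Dh := fderiv ℂ h 0 with hDh
  set DB := fderiv ℂ B 0 with hDB
  have hS' : HasFDerivAt S DS 0 := hS.differentiableAt.hasFDerivAt
  have hh' : HasFDerivAt h Dh 0 := hh.differentiableAt.hasFDerivAt
  have hB' : HasFDerivAt B DB 0 := hB.differentiableAt.hasFDerivAt
  have hBh0 : HasFDerivAt B DB (h 0) := by rwa [hh0]
  have hBh : HasFDerivAt (fun E => B (h E)) (DB.comp Dh) 0 := hBh0.comp 0 hh'
  -- derivative of LHS
  have hf : HasFDerivAt (fun E => B (h E) * S E)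
      (B (h 0) • DS + (DB.comp Dh).smulRight (S 0)) 0 := hBh.mul' hS'
  -- derivative of RHS
  have hAE : HasFDerivAt (fun E : Matrix (Fin n) (Fin n) ℂ => A + E)
      (ContinuousLinearMap.id ℂ (Matrix (Fin n) (Fin n) ℂ)) 0 :=
    (ContinuousLinearMap.id ℂ _).hasFDerivAt.const_add A
  have hg : HasFDerivAt (fun E => S E * (A + E))
      (S 0 • (ContinuousLinearMap.id ℂ (Matrix (Fin n) (Fin n) ℂ))
        + DS.smulRight (A + 0)) 0 := hS'.mul' hAE
  have hfg : (fun E => B (h E) * S E) =ᶠ[nhds 0] (fun E => S E * (A + E)) := heq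
  have hderiv_eq := hf.fderiv ▸ hg.fderiv ▸ hfg.fderiv_eq
  -- evaluate at M
  have hM := congrArg (fun (L : Matrix (Fin n) (Fin n) ℂ →L[ℂ] Matrix (Fin n) (Fin n) ℂ)
    => L M) hderiv_eq
  simp only [ContinuousLinearMap.add_apply, ContinuousLinearMap.smul_apply,
    ContinuousLinearMap.smulRight_apply, ContinuousLinearMap.comp_apply,
    ContinuousLinearMap.coe_id', id_eq, hS0, hB0, hh0] at hM
  -- hM : A • DS M + DB (Dh M) • 1 = 1 • M + DS M • (A + 0)
  refine ⟨-DS M, Dh M, ?_⟩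
  have hM' : A * DS M + DB (Dh M) = M + DS M * A := by
    simpa [smul_eq_mul] using hM
  rw [show M + (A * (-DS M) - (-DS M) * A) = (M + DS M * A) - A * DS M from by noncomm_ring,
    ← hM']
  noncomm_ring

end Versal
/-- The simple deformation of `A` whose independent parameters are located at the
positions in `Z` (all other entries of the perturbation being zero). -/
def simpleDeformation {n : ℕ} (A : Matrix (Fin n) (Fin n) ℂ)
    (Z : Finset (Fin n × Fin n)) (α : ↥Z → ℂ) : Matrix (Fin n) (Fin n) ℂ :=
  A + Matrix.of (fun i j => if h : (i, j) ∈ Z then α ⟨(i, j), h⟩ else 0)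


section Glue

variable {n : ℕ}

local notation "gl" => Matrix (Fin n) (Fin n) ℂ


/-- The linear map sending parameters to the matrix supported on `Z`. -/
noncomputable def suppMap (Z : Finset (Fin n × Fin n)) :
    (↥Z → ℂ) →ₗ[ℂ] Matrix (Fin n) (Fin n) ℂ where
  toFun := fun α => Matrix.of (fun i j => if h : (i, j) ∈ Z then α ⟨(i, j), h⟩ else 0)
  map_add' := by
    intro a b
    ext i j
    by_cases h : (i, j) ∈ Z <;> simp [h]
  map_smul' := by
    intro c a
    ext i j
    by_cases h : (i, j) ∈ Z <;> simp [h]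

lemma simpleDeformation_eq (A : Matrix (Fin n) (Fin n) ℂ) (Z : Finset (Fin n × Fin n))
    (α : ↥Z → ℂ) : simpleDeformation A Z α = A + suppMap Z α := rfl

lemma suppMap_support (Z : Finset (Fin n × Fin n)) (α : ↥Z → ℂ) :
    ∀ i j, suppMap Z α i j ≠ 0 → (i, j) ∈ Z := by
  intro i j hij
  by_contra h
  apply hij
  simp [suppMap, h]

lemma suppMap_exists (Z : Finset (Fin n × Fin n)) (P₀ : Matrix (Fin n) (Fin n) ℂ)
    (h : ∀ i j, P₀ i j ≠ 0 → (i, j) ∈ Z) :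
    suppMap Z (fun z => P₀ z.1.1 z.1.2) = P₀ := by
  ext i j
  by_cases hij : (i, j) ∈ Z
  · simp [suppMap, hij]
  · simp only [suppMap, LinearMap.coe_mk, AddHom.coe_mk, Matrix.of_apply, dif_neg hij]
    by_contra h0
    exact hij (h i j fun he => h0 he.symm)

lemma suppMap_inj (Z : Finset (Fin n × Fin n)) : Function.Injective (suppMap Z) := by
  intro a b hab
  funext z
  have := congrFun (congrFun hab z.1.1) z.1.2
  simpa [suppMap] using this

end Glue

set_option maxHeartbeats 1600000 in
set_option synthInstance.maxHeartbeats 1000000 in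
/-- a simple deformation `A + P` is versal iff every `M` satisfies
`M + (AR − RA) = P₀` for some `R` and some specialization `P₀` of `P` (a matrix
supported on the parameter positions `Z`); it is miniversal iff such a specialization
`P₀` is always unique. -/
theorem simple_versal_miniversal_criterion {n : ℕ} (A : Matrix (Fin n) (Fin n) ℂ)
    (Z : Finset (Fin n × Fin n)) :
    (IsVersal A (fun α : ↥Z → ℂ => simpleDeformation A Z α) ↔
      ∀ M : Matrix (Fin n) (Fin n) ℂ,
        ∃ R P₀ : Matrix (Fin n) (Fin n) ℂ,
          (∀ i j, P₀ i j ≠ 0 → (i, j) ∈ Z) ∧ M + (A * R - R * A) = P₀) ∧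
    ((IsVersal A (fun α : ↥Z → ℂ => simpleDeformation A Z α) ∧
        ∀ (k : ℕ) (B : (Fin k → ℂ) → Matrix (Fin n) (Fin n) ℂ),
          AnalyticAt ℂ B 0 → B 0 = A → IsVersal A B → Z.card ≤ k) ↔
      ∀ M : Matrix (Fin n) (Fin n) ℂ,
        ∃! P₀ : Matrix (Fin n) (Fin n) ℂ,
          (∀ i j, P₀ i j ≠ 0 → (i, j) ∈ Z) ∧
          ∃ R : Matrix (Fin n) (Fin n) ℂ, M + (A * R - R * A) = P₀) := by
  classical
  set Lc : Matrix (Fin n) (Fin n) ℂ →ₗ[ℂ] Matrix (Fin n) (Fin n) ℂ :=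
    LinearMap.mulLeft ℂ A - LinearMap.mulRight ℂ A with hLc
  have hLc_app : ∀ R, Lc R = A * R - R * A := by
    intro R
    simp [hLc, LinearMap.mulLeft_apply, LinearMap.mulRight_apply]
  set V := LinearMap.range Lc with hV
  set W := LinearMap.range (suppMap Z) with hW
  have hWmem : ∀ P₀ : Matrix (Fin n) (Fin n) ℂ,
      P₀ ∈ W ↔ ∀ i j, P₀ i j ≠ 0 → (i, j) ∈ Z := by
    intro P₀
    constructor
    · rintro ⟨α, rfl⟩
      exact suppMap_support Z α
    · intro h
      exact ⟨_, suppMap_exists Z P₀ h⟩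
  have hfinW : Module.finrank ℂ W = Z.card := by
    rw [hW, LinearMap.finrank_range_of_inj (suppMap_inj Z),
      Module.finrank_fintype_fun_eq_card, Fintype.card_coe]
  -- versality iff the surjectivity condition
  have key1 : IsVersal A (fun α : ↥Z → ℂ => simpleDeformation A Z α) ↔
      (∀ M : Matrix (Fin n) (Fin n) ℂ, ∃ R α, M + (A * R - R * A) = suppMap Z α) := by
    constructor
    · intro hv
      have hBan : AnalyticAt ℂ (fun α : ↥Z → ℂ => simpleDeformation A Z α) 0 := by
        exact analyticAt_const.add ((LinearMap.toContinuousLinearMap (suppMap Z)).analyticAt 0)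
      have hB0 : (fun α : ↥Z → ℂ => simpleDeformation A Z α) 0 = A := by
        show simpleDeformation A Z 0 = A
        rw [simpleDeformation_eq, map_zero, add_zero]
      have hsurj := surj_of_versal A _ hBan hB0 hv
      have hfd : fderiv ℂ (fun α : ↥Z → ℂ => simpleDeformation A Z α) 0
          = LinearMap.toContinuousLinearMap (suppMap Z) := by
        have h1 := (LinearMap.toContinuousLinearMap (suppMap Z)).hasFDerivAt
          (x := (0 : ↥Z → ℂ))
        exact (h1.const_add A).fderiv
      intro M
      obtain ⟨R, α, hRα⟩ := hsurj M
      refine ⟨R, α, ?_⟩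
      rw [hRα, hfd]
      rfl
    · intro hs
      have h := versal_of_surj A (suppMap Z) (fun M => by
        obtain ⟨R, α, hRα⟩ := hs M
        refine ⟨-R, α, ?_⟩
        rw [← hRα]
        noncomm_ring)
      exact h
  -- the surjectivity condition iff V ⊔ W = ⊤
  have key2 : (∀ M : Matrix (Fin n) (Fin n) ℂ, ∃ R α, M + (A * R - R * A) = suppMap Z α)
      ↔ V ⊔ W = ⊤ := by
    constructor
    · intro hs
      rw [eq_top_iff]
      intro M _
      obtain ⟨R, α, hRα⟩ := hs M
      have hmem : M = (A * (-R) - (-R) * A) + suppMap Z α := by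
        rw [← hRα]; noncomm_ring
      rw [hmem]
      exact Submodule.add_mem_sup ⟨-R, hLc_app (-R)⟩ ⟨α, rfl⟩
    · intro htop M
      have hM : M ∈ V ⊔ W := htop ▸ Submodule.mem_top
      obtain ⟨v, hv, w, hw, hvw⟩ := Submodule.mem_sup.1 hM
      obtain ⟨R, hR⟩ := hv
      obtain ⟨α, hα⟩ := hw
      refine ⟨-R, α, ?_⟩
      rw [hα, ← hvw, ← hR, hLc_app]
      noncomm_ring
  -- the first statement
  have key0 : (∀ M : Matrix (Fin n) (Fin n) ℂ,
      ∃ R P₀ : Matrix (Fin n) (Fin n) ℂ,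
        (∀ i j, P₀ i j ≠ 0 → (i, j) ∈ Z) ∧ M + (A * R - R * A) = P₀) ↔
      (∀ M : Matrix (Fin n) (Fin n) ℂ, ∃ R α, M + (A * R - R * A) = suppMap Z α) := by
    constructor
    · intro h M
      obtain ⟨R, P₀, hsupp, hP⟩ := h M
      exact ⟨R, fun z => P₀ z.1.1 z.1.2, by rw [suppMap_exists Z P₀ hsupp]; exact hP⟩
    · intro h M
      obtain ⟨R, α, hRα⟩ := h M
      exact ⟨R, suppMap Z α, suppMap_support Z α, hRα⟩
  refine ⟨key1.trans key0.symm, ?_⟩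
  constructor
  · rintro ⟨hv, hmin⟩
    have hsup : V ⊔ W = ⊤ := key2.1 (key1.1 hv)
    -- construct a minimal versal deformation from a complement of V
    obtain ⟨Cc, hCc⟩ := Submodule.exists_isCompl V
    set k := Module.finrank ℂ Cc with hk
    set e : (Fin k → ℂ) ≃ₗ[ℂ] Cc := (Module.finBasis ℂ Cc).equivFun.symm with he
    set Q' : (Fin k → ℂ) →ₗ[ℂ] Matrix (Fin n) (Fin n) ℂ :=
      Cc.subtype ∘ₗ (e : (Fin k → ℂ) →ₗ[ℂ] Cc) with hQ'
    have hBv : IsVersal A (fun β : Fin k → ℂ => A + Q' β) := by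
      apply versal_of_surj
      intro M
      have hM : M ∈ V ⊔ Cc := by rw [hCc.sup_eq_top]; trivial
      obtain ⟨v, hv', w, hw', hvw⟩ := Submodule.mem_sup.1 hM
      obtain ⟨R, hR⟩ := hv'
      refine ⟨R, e.symm ⟨w, hw'⟩, ?_⟩
      have hQw : Q' (e.symm ⟨w, hw'⟩) = w := by
        simp [hQ']
      rw [hQw, ← hvw, ← hR, hLc_app]
    have hBan : AnalyticAt ℂ (fun β : Fin k → ℂ => A + Q' β) 0 :=
      analyticAt_const.add ((LinearMap.toContinuousLinearMap Q').analyticAt 0)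
    have hB0 : (fun β : Fin k → ℂ => A + Q' β) 0 = A := by simp
    have hkmin : Z.card ≤ k := hmin k _ hBan hB0 hBv
    have hcompl := Submodule.finrank_add_eq_of_isCompl hCc
    have hsum := Submodule.finrank_sup_add_finrank_inf_eq V W
    rw [hsup, finrank_top] at hsum
    have hinf0 : Module.finrank ℂ ↥(V ⊓ W) = 0 := by omega
    have hinf : V ⊓ W = ⊥ := Submodule.finrank_eq_zero.1 hinf0
    -- uniqueness statement
    intro M
    obtain ⟨R, α, hRα⟩ := (key2.2 hsup) M
    refine ⟨suppMap Z α, ⟨suppMap_support Z α, R, hRα⟩, ?_⟩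
    rintro P₀' ⟨hsupp', R', hR'⟩
    have hdiff : P₀' - suppMap Z α ∈ V ⊓ W := by
      constructor
      · refine ⟨R' - R, ?_⟩
        rw [hLc_app, ← hR', ← hRα]
        noncomm_ring
      · exact Submodule.sub_mem W ((hWmem P₀').2 hsupp') ⟨α, rfl⟩
    rw [hinf, Submodule.mem_bot, sub_eq_zero] at hdiff
    exact hdiff
  · intro huniq
    have hsupS : ∀ M : Matrix (Fin n) (Fin n) ℂ,
        ∃ R α, M + (A * R - R * A) = suppMap Z α := by
      intro M
      obtain ⟨P₀, ⟨hsupp, R, hR⟩, _⟩ := huniq M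
      exact ⟨R, fun z => P₀ z.1.1 z.1.2, by rw [suppMap_exists Z P₀ hsupp]; exact hR⟩
    have hsup : V ⊔ W = ⊤ := key2.1 hsupS
    have hinf : V ⊓ W = ⊥ := by
      rw [eq_bot_iff]
      rintro X ⟨hXV, hXW⟩
      obtain ⟨R, hR⟩ := hXV
      obtain ⟨P₀, _, huniq0⟩ := huniq 0
      have h1 : X = P₀ := huniq0 X ⟨(hWmem X).1 hXW,
        ⟨R, by rw [← hR, hLc_app]; noncomm_ring⟩⟩
      have h2 : (0 : Matrix (Fin n) (Fin n) ℂ) = P₀ := huniq0 0 ⟨by simp, ⟨0, by simp⟩⟩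
      rw [Submodule.mem_bot, h1, ← h2]
    refine ⟨key1.2 (key2.2 hsup), ?_⟩
    intro k B hBan hB0 hBv
    have hs := surj_of_versal A B hBan hB0 hBv
    set rng := LinearMap.range
      ((fderiv ℂ B 0 : (Fin k → ℂ) →L[ℂ] Matrix (Fin n) (Fin n) ℂ)
        : (Fin k → ℂ) →ₗ[ℂ] Matrix (Fin n) (Fin n) ℂ) with hrng
    have hsup2 : V ⊔ rng = ⊤ := by
      rw [eq_top_iff]
      intro M _
      obtain ⟨R, α, hRα⟩ := hs M
      have hmem : M = (A * (-R) - (-R) * A) + fderiv ℂ B 0 α := by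
        rw [← hRα]; noncomm_ring
      rw [hmem]
      exact Submodule.add_mem_sup ⟨-R, hLc_app (-R)⟩ ⟨α, rfl⟩
    have h1 := Submodule.finrank_sup_add_finrank_inf_eq V rng
    rw [hsup2, finrank_top] at h1
    have h2 : Module.finrank ℂ rng ≤ k := by
      have h3 := LinearMap.finrank_range_le
        ((fderiv ℂ B 0 : (Fin k → ℂ) →L[ℂ] Matrix (Fin n) (Fin n) ℂ)
          : (Fin k → ℂ) →ₗ[ℂ] Matrix (Fin n) (Fin n) ℂ)
      rwa [Module.finrank_fintype_fun_eq_card, Fintype.card_fin] at h3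
    have h3 := Submodule.finrank_sup_add_finrank_inf_eq V W
    rw [hsup, hinf, finrank_top, finrank_bot] at h3
    omega
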